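/- Let m = 1 (or general m ≥ 1, n = 2m), let h be harmonic near a ∈ ℝ² and let φ(z) = (log |z−a|²)^α · h(z) with constant α ≥ 0. Then for small r > 0, the harmonic residue Res_a(φ,r) := −∫_{∂B(a,r)} d^c φ equals −α (log r²)^{α−1} h(a). -/

import Mathlib

open MeasureTheory Metric Set Filter
open scoped Topology RealInnerProductSpace

noncomputable section

/-- Euclidean n-space. -/
abbrev Euc (n : ℕ) := EuclideanSpace ℝ (Fin n)

/-- The surface measure on the unit sphere of `ℝⁿ`. -/
def unitSphereM (n : ℕ) : Measure (sphere (0 : Euc n) 1) :=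
  (volume : Measure (Euc n)).toSphere

/-- `σ_{n-1}`, the total surface area of the unit sphere in `ℝⁿ`. -/
def sphereArea (n : ℕ) : ℝ := (unitSphereM n Set.univ).toReal

/-- `ω_n`, the volume of the unit ball in `ℝⁿ`. -/
def ballVol (n : ℕ) : ℝ := (volume (ball (0 : Euc n) 1)).toReal

/-- The spherical mean `(1/(σ_{n-1} t^{n-1})) ∫_{∂B(a,t)} φ dσ`, expressed by
rescaling the sphere integral to the unit sphere. -/
def sphMean {n : ℕ} (φ : Euc n → ℝ) (a : Euc n) (t : ℝ) : ℝ :=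
  (sphereArea n)⁻¹ * ∫ ω : sphere (0 : Euc n) 1, φ (a + t • (ω : Euc n)) ∂(unitSphereM n)

/-- The solid mean `(1/(ω_n r^n)) ∫_{B(a,r)} φ dV`. -/
def solidMean {n : ℕ} (φ : Euc n → ℝ) (a : Euc n) (r : ℝ) : ℝ :=
  (ballVol n * r ^ n)⁻¹ * ∫ x in ball a r, φ x

/-- The Laplacian `Δφ = Σ ∂²φ/∂xᵢ²`. -/
def lap {n : ℕ} (φ : Euc n → ℝ) (x : Euc n) : ℝ :=
  ∑ i : Fin n,
    fderiv ℝ (fun y => fderiv ℝ φ y (EuclideanSpace.single i 1)) x (EuclideanSpace.single i 1)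

/-- The divergence of a vector field on `ℝⁿ`. -/
def divg {n : ℕ} (F : Euc n → Euc n) (x : Euc n) : ℝ :=
  ∑ i : Fin n,
    ⟪fderiv ℝ F x (EuclideanSpace.single i 1), (EuclideanSpace.single i 1 : Euc n)⟫

/-- The Laplacian on `ℂ ≅ ℝ²`. -/
def lapC (f : ℂ → ℝ) (z : ℂ) : ℝ :=
  fderiv ℝ (fun w => fderiv ℝ f w 1) z 1 +
    fderiv ℝ (fun w => fderiv ℝ f w Complex.I) z Complex.I

section Aux
open Complex intervalIntegral

def cgrad (h : ℂ → ℝ) (w : ℂ) : ℂ :=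
  (fderiv ℝ h w 1 : ℂ) - Complex.I * (fderiv ℝ h w Complex.I : ℂ)

lemma vdecomp (v : ℂ) : v = v.re • (1:ℂ) + v.im • Complex.I := by
  simp [Complex.real_smul, Complex.re_add_im]

lemma fderiv_real_apply (f : ℂ → ℝ) (z v : ℂ) :
    fderiv ℝ f z v = v.re * fderiv ℝ f z 1 + v.im * fderiv ℝ f z Complex.I := by
  conv_lhs => rw [vdecomp v]
  rw [map_add, ContinuousLinearMap.map_smul, ContinuousLinearMap.map_smul]
  simp [smul_eq_mul]

lemma cgrad_holo (U : Set ℂ) (hU : IsOpen U) (h : ℂ → ℝ)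
    (hh : ContDiffOn ℝ 2 h U) (hharm : ∀ z ∈ U, lapC h z = 0) :
    ∀ z ∈ U, DifferentiableAt ℂ (cgrad h) z := by
  intro z hz
  have hz2 : ContDiffAt ℝ 2 h z := hh.contDiffAt (hU.mem_nhds hz)
  have hf'c : ContDiffAt ℝ 1 (fderiv ℝ h) z := hz2.fderiv_right (by norm_num)
  have hf'd : DifferentiableAt ℝ (fderiv ℝ h) z := hf'c.differentiableAt (by norm_num)
  set H := fderiv ℝ (fderiv ℝ h) z with hHdef
  have hH : HasFDerivAt (fderiv ℝ h) H z := hf'd.hasFDerivAt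
  -- symmetry
  have hsymm : H 1 Complex.I = H Complex.I 1 := by
    have := hz2.isSymmSndFDerivAt (by norm_num)
    exact this 1 Complex.I
  -- harmonicity in terms of H
  have e1 : ∀ v : ℂ, fderiv ℝ (fun w => fderiv ℝ h w v) z = H.flip v := by
    intro v
    have := fderiv_clm_apply (c := fderiv ℝ h) (u := fun _ => v) hf'd
      (differentiableAt_const v)
    simpa using this
  have hharm' : H 1 1 + H Complex.I Complex.I = 0 := by
    have h0 := hharm z hz
    unfold lapC at h0
    rw [e1 1, e1 Complex.I] at h0
    simpa using h0
  -- real derivative of cgrad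
  have d1 : HasFDerivAt (fun w => fderiv ℝ h w (1:ℂ))
      ((ContinuousLinearMap.apply ℝ ℝ (1:ℂ)).comp H) z :=
    (ContinuousLinearMap.apply ℝ ℝ (1:ℂ)).hasFDerivAt.comp z hH
  have d2 : HasFDerivAt (fun w => fderiv ℝ h w Complex.I)
      ((ContinuousLinearMap.apply ℝ ℝ Complex.I).comp H) z :=
    (ContinuousLinearMap.apply ℝ ℝ Complex.I).hasFDerivAt.comp z hH
  set cI : ℝ →L[ℝ] ℂ := (ContinuousLinearMap.id ℝ ℝ).smulRight Complex.I with hcI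
  set L : ℂ →L[ℝ] ℂ :=
    Complex.ofRealCLM.comp ((ContinuousLinearMap.apply ℝ ℝ (1:ℂ)).comp H)
      - cI.comp ((ContinuousLinearMap.apply ℝ ℝ Complex.I).comp H) with hL
  have hF : HasFDerivAt (cgrad h) L z := by
    have := (Complex.ofRealCLM.hasFDerivAt.comp z d1).sub
      (cI.hasFDerivAt.comp z d2)
    have e : cgrad h = ((⇑Complex.ofRealCLM ∘ fun w => fderiv ℝ h w 1)
        - ⇑cI ∘ fun w => fderiv ℝ h w Complex.I) := by
      funext w
      unfold cgrad
      simp [hcI, Complex.real_smul, mul_comm]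
    rw [e]; exact this
  have hLapp : ∀ v : ℂ, L v = (H v 1 : ℂ) - Complex.I * (H v Complex.I : ℂ) := by
    intro v; simp [hL, hcI, Complex.real_smul, mul_comm]
  have hHv : ∀ v : ℂ, H v = v.re • H 1 + v.im • H Complex.I := by
    intro v; conv_lhs => rw [vdecomp v]
    rw [map_add, ContinuousLinearMap.map_smul, ContinuousLinearMap.map_smul]
  have key : ∀ v : ℂ, L v = v * L 1 := by
    intro v
    rw [hLapp v, hLapp 1]
    rw [hHv v]
    simp only [ContinuousLinearMap.add_apply, ContinuousLinearMap.smul_apply, smul_eq_mul]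
    have hII : H Complex.I Complex.I = -(H 1 1) := by linarith
    rw [hII, ← hsymm]
    apply Complex.ext <;>
      simp [Complex.mul_re, Complex.mul_im] <;> ring
  set L' : ℂ →L[ℂ] ℂ := (1 : ℂ →L[ℂ] ℂ).smulRight (L 1) with hL'
  have : HasFDerivAt (cgrad h) L' z := by
    apply hasFDerivAt_of_restrictScalars ℝ hF
    ext v
    simp [hL', key v, smul_eq_mul]
  exact this.differentiableAt

lemma re_mul_cgrad (h : ℂ → ℝ) (z v : ℂ) :
    (v * cgrad h z).re = fderiv ℝ h z v := by
  rw [fderiv_real_apply]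
  simp [cgrad, Complex.mul_re, Complex.mul_im]

lemma mean_value (U : Set ℂ) (hU : IsOpen U) (a : ℂ) (haU : a ∈ U) (h : ℂ → ℝ)
    (hh : ContDiffOn ℝ 2 h U) (hharm : ∀ z ∈ U, lapC h z = 0) :
    ∃ ε > (0:ℝ), ∀ ρ ∈ Ico (0:ℝ) ε,
      ∫ θ in (0:ℝ)..(2*Real.pi), h (a + ρ * Complex.exp (θ * Complex.I))
        = 2 * Real.pi * h a := by
  obtain ⟨ε₀, hε₀, hball⟩ : ∃ ε₀ > 0, closedBall a ε₀ ⊆ U := by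
    obtain ⟨ε₁, hε₁, hb⟩ := Metric.isOpen_iff.1 hU a haU
    exact ⟨ε₁/2, by linarith, (closedBall_subset_ball (by linarith)).trans hb⟩
  have hconth : ContinuousOn h U := hh.continuousOn
  have hcontf' : ContinuousOn (fderiv ℝ h) U :=
    hh.continuousOn_fderiv_of_isOpen hU (by norm_num)
  obtain ⟨M, hM⟩ := (isCompact_closedBall a ε₀).exists_bound_of_continuousOn
    (hcontf'.mono hball)
  set γ : ℝ → ℝ → ℂ := fun x θ => a + x * Complex.exp (θ * Complex.I) with hγ
  have hγmem : ∀ x θ : ℝ, |x| ≤ ε₀ → γ x θ ∈ closedBall a ε₀ := by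
    intro x θ hx
    simp only [hγ, mem_closedBall, dist_eq, add_sub_cancel_left]
    rw [norm_mul]
    simpa [Complex.norm_exp] using hx
  have hγcont : ∀ x : ℝ, Continuous (fun θ => γ x θ) := by
    intro x; fun_prop
  have hexpnorm : ∀ θ : ℝ, ‖Complex.exp (θ * Complex.I)‖ = 1 := by
    intro θ; simp [Complex.norm_exp]
  set g : ℝ → ℝ := fun x => ∫ θ in (0:ℝ)..(2*Real.pi), h (γ x θ) with hg
  set D : ℝ → ℝ → ℝ := fun x θ => fderiv ℝ h (γ x θ) (Complex.exp (θ * Complex.I))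
    with hD
  have hDcont : ∀ x : ℝ, |x| ≤ ε₀ → Continuous (D x) := by
    intro x hx
    apply Continuous.clm_apply
    · exact hcontf'.comp_continuous (hγcont x) (fun θ => hball (hγmem x θ hx))
    · fun_prop
  -- derivative of g
  have hgderiv : ∀ x₀ ∈ Icc (0:ℝ) (ε₀/2),
      HasDerivAt g (∫ θ in (0:ℝ)..(2*Real.pi), D x₀ θ) x₀ := by
    intro x₀ hx₀
    have hx₀abs : |x₀| ≤ ε₀/2 := by
      rw [_root_.abs_of_nonneg hx₀.1]; exact hx₀.2
    have hballmem : ∀ x : ℝ, x ∈ ball x₀ (ε₀/4) → |x| ≤ ε₀ := by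
      intro x hx
      have h2 : |x - x₀| < ε₀/4 := by simpa [Real.dist_eq] using hx
      calc |x| = |x₀ + (x - x₀)| := by ring_nf
        _ ≤ |x₀| + |x - x₀| := abs_add_le _ _
        _ ≤ ε₀ := by linarith
    have hmem : ∀ x : ℝ, |x| ≤ ε₀ → ∀ θ : ℝ, γ x θ ∈ U :=
      fun x hx θ => hball (hγmem x θ hx)
    have hx₀ε : |x₀| ≤ ε₀ := by linarith [abs_nonneg x₀]
    have key := intervalIntegral.hasDerivAt_integral_of_dominated_loc_of_deriv_le
      (F := fun x θ => h (γ x θ)) (F' := D) (x₀ := x₀) (a := (0:ℝ)) (b := 2*Real.pi)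
      (bound := fun _ => M) (μ := volume) (s := ball x₀ (ε₀/4)) (ball_mem_nhds x₀ (by linarith))
      ?meas ?int ?meas' ?bnd ?bint ?diff
    · exact key.2
    case meas =>
      have : ∀ᶠ x in 𝓝 x₀, x ∈ ball x₀ (ε₀/4) :=
        ball_mem_nhds x₀ (by linarith)
      filter_upwards [this] with x hx
      exact ((hconth.comp_continuous (hγcont x)
        (hmem x (hballmem x hx))).aestronglyMeasurable).restrict
    case int =>
      exact (hconth.comp_continuous (hγcont x₀) (hmem x₀ hx₀ε)).intervalIntegrable _ _
    case meas' =>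
      exact ((hDcont x₀ hx₀ε).aestronglyMeasurable).restrict
    case bnd =>
      filter_upwards with θ _ x hx
      have hz : γ x θ ∈ closedBall a ε₀ := hγmem x θ (hballmem x hx)
      calc ‖D x θ‖ ≤ ‖fderiv ℝ h (γ x θ)‖ * ‖Complex.exp (θ * Complex.I)‖ :=
            (fderiv ℝ h (γ x θ)).le_opNorm _
        _ ≤ M := by
            rw [hexpnorm θ, mul_one]
            exact hM _ hz
    case bint => exact intervalIntegrable_const
    case diff =>
      filter_upwards with θ _ x hx
      have hcurve : HasDerivAt (fun x : ℝ => γ x θ) (Complex.exp (θ * Complex.I)) x := by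
        have h1 : HasDerivAt (fun y : ℝ => (y : ℂ)) 1 x := (hasDerivAt_id x).ofReal_comp
        simpa [hγ] using (h1.mul_const (Complex.exp (θ * Complex.I))).const_add a
      have hdiffh : DifferentiableAt ℝ h (γ x θ) := by
        have := hh.contDiffAt (hU.mem_nhds (hmem x (hballmem x hx) θ))
        exact this.differentiableAt (by norm_num)
      exact hdiffh.hasFDerivAt.comp_hasDerivAt x hcurve
  -- the derivative is zero
  have hDzero : ∀ x₀ ∈ Icc (0:ℝ) (ε₀/2), (∫ θ in (0:ℝ)..(2*Real.pi), D x₀ θ) = 0 := by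
    intro x₀ hx₀
    have hx₀ε : |x₀| ≤ ε₀ := by
      rw [_root_.abs_of_nonneg hx₀.1]; linarith [hx₀.2]
    rcases eq_or_lt_of_le hx₀.1 with h0 | hpos
    · -- x₀ = 0
      subst h0
      have hDval : ∀ θ : ℝ, D 0 θ
          = Real.cos θ * fderiv ℝ h a 1 + Real.sin θ * fderiv ℝ h a Complex.I := by
        intro θ
        have hγ0 : γ 0 θ = a := by simp [hγ]
        rw [hD]
        simp only [hγ0]
        rw [fderiv_real_apply]
        simp [Complex.exp_ofReal_mul_I_re, Complex.exp_ofReal_mul_I_im]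
      rw [intervalIntegral.integral_congr (g := fun θ : ℝ =>
        Real.cos θ * fderiv ℝ h a 1 + Real.sin θ * fderiv ℝ h a Complex.I)
        (fun θ _ => hDval θ)]
      rw [intervalIntegral.integral_add
        (f := fun θ : ℝ => Real.cos θ * fderiv ℝ h a 1) (g := fun θ : ℝ => Real.sin θ * fderiv ℝ h a Complex.I)
        ((Real.continuous_cos.mul continuous_const).intervalIntegrable _ _)
        ((Real.continuous_sin.mul continuous_const).intervalIntegrable _ _)]
      rw [intervalIntegral.integral_mul_const, intervalIntegral.integral_mul_const]
      simp [integral_cos, integral_sin, Real.sin_two_pi, Real.cos_two_pi]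
    · -- x₀ > 0 : Cauchy
      have hcb : closedBall a x₀ ⊆ U := by
        apply Subset.trans _ hball
        exact closedBall_subset_closedBall (by linarith [hx₀.2])
      have hcau : (∮ z in C(a, x₀), cgrad h z) = 0 := by
        apply circleIntegral_eq_zero_of_differentiable_on_off_countable
          (le_of_lt hpos) countable_empty
        · apply ContinuousOn.mono _ hcb
          apply ContinuousOn.sub
          · exact Complex.continuous_ofReal.comp_continuousOn
              (hcontf'.clm_apply continuousOn_const)
          · exact continuousOn_const.mul (Complex.continuous_ofReal.comp_continuousOn
              (hcontf'.clm_apply continuousOn_const))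
        · intro z hz
          exact cgrad_holo U hU h hh hharm z (hcb (ball_subset_closedBall hz.1))
      have hint0 : (∫ θ in (0:ℝ)..(2*Real.pi),
          Complex.exp (θ * Complex.I) * cgrad h (γ x₀ θ)) = 0 := by
        have : (∮ z in C(a, x₀), cgrad h z)
            = (x₀ * Complex.I) * ∫ θ in (0:ℝ)..(2*Real.pi),
                Complex.exp (θ * Complex.I) * cgrad h (γ x₀ θ) := by
          rw [circleIntegral]
          rw [← intervalIntegral.integral_const_mul]
          congr 1
          funext θ
          simp only [deriv_circleMap, circleMap, smul_eq_mul, hγ]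
          push_cast
          ring_nf
        rw [this] at hcau
        have hne : ((x₀:ℂ) * Complex.I) ≠ 0 :=
          mul_ne_zero (by exact_mod_cast ne_of_gt hpos) Complex.I_ne_zero
        exact (mul_eq_zero.1 hcau).resolve_left hne
      have hcontint : Continuous fun θ : ℝ =>
          Complex.exp (θ * Complex.I) * cgrad h (γ x₀ θ) := by
        apply Continuous.mul
        · fun_prop
        · have : ContinuousOn (cgrad h) U := by
            apply ContinuousOn.sub
            · exact Complex.continuous_ofReal.comp_continuousOn
                (hcontf'.clm_apply continuousOn_const)
            · exact continuousOn_const.mul (Complex.continuous_ofReal.comp_continuousOn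
                (hcontf'.clm_apply continuousOn_const))
          exact this.comp_continuous (hγcont x₀) (fun θ => hball (hγmem x₀ θ hx₀ε))
      have hre := Complex.reCLM.intervalIntegral_comp_comm
        (a := (0:ℝ)) (b := 2*Real.pi) (μ := volume) (hcontint.intervalIntegrable _ _)
      have : (∫ θ in (0:ℝ)..(2*Real.pi), D x₀ θ)
          = (∫ θ in (0:ℝ)..(2*Real.pi),
              Complex.exp (θ * Complex.I) * cgrad h (γ x₀ θ)).re := by
        rw [show ((∫ θ in (0:ℝ)..(2*Real.pi),
              Complex.exp (θ * Complex.I) * cgrad h (γ x₀ θ)).re)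
            = Complex.reCLM (∫ θ in (0:ℝ)..(2*Real.pi),
              Complex.exp (θ * Complex.I) * cgrad h (γ x₀ θ)) from rfl]
        rw [← hre]
        apply intervalIntegral.integral_congr
        intro θ _
        simp only [hD, Complex.reCLM_apply, re_mul_cgrad]
      rw [this, hint0]
      simp
  -- conclude: g is constant
  refine ⟨ε₀/2, by linarith, ?_⟩
  intro ρ hρ
  have hconst : ∀ x ∈ Icc (0:ℝ) (ε₀/2), g x = g 0 := by
    apply constant_of_has_deriv_right_zero
    · intro x hx
      exact (hgderiv x hx).continuousAt.continuousWithinAt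
    · intro x hx
      have hx' : x ∈ Icc (0:ℝ) (ε₀/2) := ⟨hx.1, le_of_lt hx.2⟩
      have hd := hgderiv x hx'
      rw [hDzero x hx'] at hd
      exact hd.hasDerivWithinAt
  have hg0 : g 0 = 2 * Real.pi * h a := by
    rw [hg]
    simp only
    rw [intervalIntegral.integral_congr (g := fun _ : ℝ => h a)
      (fun θ _ => by simp [hγ])]
    simp [mul_comm]
  have := hconst ρ ⟨hρ.1, le_of_lt hρ.2⟩
  rw [hg0] at this
  exact this

end Aux

theorem stmt_8 (a : ℂ) (U : Set ℂ) (hU : IsOpen U) (haU : a ∈ U)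
    (h : ℂ → ℝ) (hh : ContDiffOn ℝ 2 h U) (hharm : ∀ z ∈ U, lapC h z = 0)
    (α : ℝ) (hα : 0 ≤ α) (φ : ℂ → ℝ)
    (hφ : ∀ z : ℂ, φ z = Real.log (‖z - a‖ ^ 2) ^ α * h z) :
    ∃ ε > (0 : ℝ), ∀ r ∈ Ioo (0 : ℝ) ε,
      -(1 / (4 * Real.pi)) * r *
          deriv (fun ρ : ℝ =>
            ∫ θ in (0 : ℝ)..(2 * Real.pi), φ (a + ρ * Complex.exp (θ * Complex.I))) r
        = -α * Real.log (r ^ 2) ^ (α - 1) * h a := by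
  obtain ⟨ε₁, hε₁, hmv⟩ := mean_value U hU a haU h hh hharm
  refine ⟨min ε₁ 1, lt_min hε₁ one_pos, ?_⟩
  rintro r ⟨hr0, hrε⟩
  have hr1 : r < 1 := lt_of_lt_of_le hrε (min_le_right _ _)
  have hrε₁ : r < ε₁ := lt_of_lt_of_le hrε (min_le_left _ _)
  -- eventual equality
  have heq : (fun ρ : ℝ =>
        ∫ θ in (0 : ℝ)..(2 * Real.pi), φ (a + ρ * Complex.exp (θ * Complex.I)))
      =ᶠ[𝓝 r] fun ρ : ℝ => Real.log (ρ ^ 2) ^ α * (2 * Real.pi * h a) := by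
    have hmem : Ioo (0:ℝ) ε₁ ∈ 𝓝 r := isOpen_Ioo.mem_nhds ⟨hr0, hrε₁⟩
    filter_upwards [hmem] with ρ hρ
    have habs : ∀ θ : ℝ, ‖(a + ρ * Complex.exp (θ * Complex.I)) - a‖ = ρ := by
      intro θ
      rw [add_sub_cancel_left, norm_mul]
      simp [Complex.norm_exp, abs_of_pos hρ.1]
    have : ∀ θ : ℝ, φ (a + ρ * Complex.exp (θ * Complex.I))
        = Real.log (ρ ^ 2) ^ α * h (a + ρ * Complex.exp (θ * Complex.I)) := by
      intro θ
      rw [hφ, habs]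
    rw [intervalIntegral.integral_congr (fun θ _ => this θ),
      intervalIntegral.integral_const_mul,
      hmv ρ ⟨le_of_lt hρ.1, hρ.2⟩]
  rw [heq.deriv_eq]
  -- compute the derivative
  have hr2pos : (0:ℝ) < r ^ 2 := by positivity
  have hr2lt : r ^ 2 < 1 := by nlinarith
  have hL0 : Real.log (r ^ 2) ≠ 0 := ne_of_lt (Real.log_neg hr2pos hr2lt)
  have h1 : HasDerivAt (fun ρ : ℝ => ρ ^ 2) (2 * r) r := by
    simpa using hasDerivAt_pow 2 r
  have hlog : HasDerivAt (fun ρ : ℝ => Real.log (ρ ^ 2)) ((2 * r) / r ^ 2) r :=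
    h1.log (ne_of_gt hr2pos)
  have hcomp : HasDerivAt (fun ρ : ℝ => Real.log (ρ ^ 2) ^ α * (2 * Real.pi * h a))
      (α * Real.log (r ^ 2) ^ (α - 1) * ((2 * r) / r ^ 2) * (2 * Real.pi * h a)) r := by
    have h2 := hlog.rpow_const (p := α) (Or.inl hL0)
    exact (by simpa [mul_comm, mul_assoc, mul_left_comm] using h2.mul_const (2 * Real.pi * h a))
  rw [hcomp.deriv]
  have hπ : Real.pi ≠ 0 := Real.pi_ne_zero
  have hrne : r ≠ 0 := ne_of_gt hr0
  field_simp
  ring
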